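/- arXiv:2507.03767 — 3 statements merged into one kernel-verified Lean document; each statement's English description precedes it below -/
import Mathlib

section
/- Fix n ≥ 1 and real β > n. Define the weighted space D_β of formal power series f = Σ_L a_L z^L (L ranging over multi-indices in ℕ^n) with norm ‖f‖² = Σ_L |a_L|² (|L|+n)^β < ∞. Then D_β is closed under the Cauchy product: there is a constant C = C(n,β) such that for all f, g ∈ D_β, ‖f·g‖ ≤ C ‖f‖ ‖g‖, where (f·g)'s coefficient at L is Σ_{L_1+L_2=L} a_{L_1} b_{L_2}. -/
open Finset

section Stmt6Aux

variable {n : ℕ}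

set_option maxHeartbeats 1000000 in
private lemma stmt6_pi_prod_summable (f : ℕ → ℝ) (hf0 : ∀ k, 0 ≤ f k) (hf : Summable f)
    (m : ℕ) : Summable (fun L : Fin m → ℕ => ∏ i, f (L i)) := by
  induction m with
  | zero =>
      simp only [Finset.univ_eq_empty, Finset.prod_empty]
      exact Summable.of_finite
  | succ m ih =>
      have h2 : Summable (fun p : ℕ × (Fin m → ℕ) => f p.1 * ∏ i, f (p.2 i)) :=
        Summable.mul_of_nonneg (f := f) (g := fun L : Fin m → ℕ => ∏ i, f (L i))
          hf ih hf0 (fun L => Finset.prod_nonneg fun i _ => hf0 _)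
      have h3 := h2.comp_injective (Fin.consEquiv (fun _ => ℕ)).symm.injective
      refine h3.congr fun L => ?_
      simp [Fin.consEquiv, Function.comp, Fin.prod_univ_succ, Fin.tail]

private lemma stmt6_summable_inv_weight (hn : 1 ≤ n) {β : ℝ} (hβ : (n : ℝ) < β)
    (hps : Summable (fun L : Fin n → ℕ => ∏ i, ((L i : ℝ) + 1) ^ (-(β / n)))) :
    Summable (fun L : Fin n → ℕ => ((((∑ i, (L i : ℝ)) + n)) ^ β)⁻¹) := by
  have hn0 : (0:ℝ) < n := by exact_mod_cast hn
  have hβ0 : (0:ℝ) < β := lt_trans hn0 hβ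
  refine Summable.of_nonneg_of_le (fun L => by positivity) (fun L => ?_) hps
  set s : ℝ := (∑ i, (L i : ℝ)) + n with hs
  have hs0 : (0:ℝ) < s := by
    have : (0:ℝ) ≤ ∑ i, (L i : ℝ) := Finset.sum_nonneg fun i _ => by positivity
    simp only [hs]; linarith
  have hterm : ∀ i : Fin n, (L i : ℝ) + 1 ≤ s := by
    intro i
    have h1 : (L i : ℝ) ≤ ∑ j, (L j : ℝ) :=
      Finset.single_le_sum (f := fun j => (L j : ℝ)) (fun j _ => by positivity)
        (Finset.mem_univ i)
    have : (1:ℝ) ≤ n := by exact_mod_cast hn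
    simp only [hs]; linarith
  have hprod : ∏ i, ((L i : ℝ) + 1) ≤ s ^ n := by
    calc ∏ i, ((L i : ℝ) + 1) ≤ ∏ _i : Fin n, s :=
          Finset.prod_le_prod (fun i _ => by positivity) (fun i _ => hterm i)
      _ = s ^ n := by simp
  have hprodpos : (0:ℝ) < ∏ i, ((L i : ℝ) + 1) :=
    Finset.prod_pos fun i _ => by positivity
  have key : (s ^ n : ℝ) ^ (-(β / n)) ≤ (∏ i, ((L i : ℝ) + 1)) ^ (-(β / n)) :=
    Real.rpow_le_rpow_of_nonpos hprodpos hprod (neg_nonpos.mpr (by positivity))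
  have h2 : ((s : ℝ) ^ n : ℝ) ^ (-(β / n)) = (s ^ β)⁻¹ := by
    rw [← Real.rpow_natCast s n, ← Real.rpow_mul hs0.le, ← Real.rpow_neg hs0.le]
    congr 1
    field_simp
  have h3 : (∏ i, ((L i : ℝ) + 1)) ^ (-(β / n)) = ∏ i, ((L i : ℝ) + 1) ^ (-(β / n)) :=
    (Real.finset_prod_rpow _ _ (fun i _ => by positivity) _).symm
  calc (s ^ β)⁻¹ = ((s : ℝ) ^ n : ℝ) ^ (-(β / n)) := h2.symm
    _ ≤ (∏ i, ((L i : ℝ) + 1)) ^ (-(β / n)) := key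
    _ = ∏ i, ((L i : ℝ) + 1) ^ (-(β / n)) := h3

private def stmt6_iicEquiv (n : ℕ) :
    ((Fin n → ℕ) × (Fin n → ℕ)) ≃ (Σ L : Fin n → ℕ, (Finset.Iic L : Finset (Fin n → ℕ))) where
  toFun q := ⟨q.1 + q.2, ⟨q.1, by simp [Finset.mem_Iic, le_add_of_nonneg_right]⟩⟩
  invFun p := (p.2.1, p.1 - p.2.1)
  left_inv q := by
    ext <;> simp [add_tsub_cancel_left]
  right_inv p := by
    rcases p with ⟨L, M, hM⟩
    have h : M ≤ L := Finset.mem_Iic.mp hM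
    obtain ⟨D, rfl⟩ := exists_add_of_le h
    exact Sigma.subtype_ext (by simp) rfl

private lemma stmt6_fubini_iic (F : (Fin n → ℕ) → (Fin n → ℕ) → ENNReal) :
    ∑' L : Fin n → ℕ, ∑ L₁ ∈ Finset.Iic L, F L₁ (L - L₁)
      = ∑' L₁ : Fin n → ℕ, ∑' L₂ : Fin n → ℕ, F L₁ L₂ := by
  calc ∑' L : Fin n → ℕ, ∑ L₁ ∈ Finset.Iic L, F L₁ (L - L₁)
      = ∑' (L : Fin n → ℕ) (p : (Finset.Iic L : Finset (Fin n → ℕ))), F p (L - p) := by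
        refine tsum_congr fun L => ?_
        exact (Finset.tsum_subtype (Finset.Iic L) (fun M => F M (L - M))).symm
    _ = ∑' (p : Σ L : Fin n → ℕ, (Finset.Iic L : Finset (Fin n → ℕ))), F p.2 (p.1 - p.2) :=
        (ENNReal.tsum_sigma'
          (fun (p : Σ L : Fin n → ℕ, (Finset.Iic L : Finset (Fin n → ℕ))) =>
            F p.2 (p.1 - p.2))).symm
    _ = ∑' (q : (Fin n → ℕ) × (Fin n → ℕ)), F q.1 q.2 := by
        rw [← Equiv.tsum_eq (stmt6_iicEquiv n) (fun p => F p.2 (p.1 - p.2))]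
        refine tsum_congr fun q => ?_
        simp [stmt6_iicEquiv, add_tsub_cancel_left]
    _ = ∑' L₁ : Fin n → ℕ, ∑' L₂ : Fin n → ℕ, F L₁ L₂ := ENNReal.tsum_prod'

private lemma stmt6_sum_Iic_sub (L : Fin n → ℕ) (h : (Fin n → ℕ) → ℝ) :
    ∑ L₁ ∈ Finset.Iic L, h (L - L₁) = ∑ L₁ ∈ Finset.Iic L, h L₁ := by
  refine Finset.sum_nbij' (fun M => L - M) (fun M => L - M) ?_ ?_ ?_ ?_ ?_ <;>
    intro M hM <;>
    simp only [Finset.mem_Iic] at * <;>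
    first
      | exact tsub_le_self
      | (exact tsub_tsub_cancel_of_le hM)
      | rfl

private lemma stmt6_sigma_split {L₁ L : Fin n → ℕ} (h : L₁ ≤ L) :
    (∑ i, (L i : ℝ)) = (∑ i, (L₁ i : ℝ)) + ∑ i, ((L - L₁) i : ℝ) := by
  rw [← Finset.sum_add_distrib]
  refine Finset.sum_congr rfl fun i _ => ?_
  have hi : L₁ i ≤ L i := h i
  have : ((L - L₁) i : ℝ) = (L i : ℝ) - (L₁ i : ℝ) := by
    rw [Pi.sub_apply, Nat.cast_sub hi]
  rw [this]; ring

private lemma stmt6_weight_le (hn : 1 ≤ n) {β : ℝ} (hβ0 : 0 ≤ β) {L₁ L : Fin n → ℕ}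
    (h : L₁ ≤ L) :
    ((∑ i, (L i : ℝ)) + n) ^ β ≤
      2 ^ β * (((∑ i, (L₁ i : ℝ)) + n) ^ β + ((∑ i, ((L - L₁) i : ℝ)) + n) ^ β) := by
  set x : ℝ := (∑ i, (L₁ i : ℝ)) + n with hx
  set y : ℝ := (∑ i, ((L - L₁) i : ℝ)) + n with hy
  set z : ℝ := (∑ i, (L i : ℝ)) + n with hz
  have hn0 : (1:ℝ) ≤ n := by exact_mod_cast hn
  have hx0 : 0 < x := by
    have : (0:ℝ) ≤ ∑ i, (L₁ i : ℝ) := Finset.sum_nonneg fun i _ => by positivity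
    simp only [hx]; linarith
  have hy0 : 0 < y := by
    have : (0:ℝ) ≤ ∑ i, ((L - L₁) i : ℝ) := Finset.sum_nonneg fun i _ => by positivity
    simp only [hy]; linarith
  have hz0 : 0 < z := by
    have : (0:ℝ) ≤ ∑ i, (L i : ℝ) := Finset.sum_nonneg fun i _ => by positivity
    simp only [hz]; linarith
  have hzs : z ≤ x + y := by
    have := stmt6_sigma_split h
    simp only [hx, hy, hz]; linarith
  rcases le_total x y with hxy | hxy
  · calc z ^ β ≤ (2 * y) ^ β :=
          Real.rpow_le_rpow hz0.le (by linarith) hβ0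
      _ = 2 ^ β * y ^ β := Real.mul_rpow (by norm_num) hy0.le
      _ ≤ 2 ^ β * (x ^ β + y ^ β) := by
          have : (0:ℝ) ≤ x ^ β := Real.rpow_nonneg hx0.le β
          have h2 : (0:ℝ) ≤ (2:ℝ) ^ β := Real.rpow_nonneg (by norm_num) β
          nlinarith
  · calc z ^ β ≤ (2 * x) ^ β :=
          Real.rpow_le_rpow hz0.le (by linarith) hβ0
      _ = 2 ^ β * x ^ β := Real.mul_rpow (by norm_num) hx0.le
      _ ≤ 2 ^ β * (x ^ β + y ^ β) := by
          have : (0:ℝ) ≤ y ^ β := Real.rpow_nonneg hy0.le β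
          have h2 : (0:ℝ) ≤ (2:ℝ) ^ β := Real.rpow_nonneg (by norm_num) β
          nlinarith

private lemma stmt6_core_step (hn : 1 ≤ n) {β : ℝ} (hβ : (n : ℝ) < β) {S : ℝ}
    (hS : Summable (fun L : Fin n → ℕ => ((((∑ i, (L i : ℝ)) + n)) ^ β)⁻¹))
    (hStsum : ∑' L : Fin n → ℕ, ((((∑ i, (L i : ℝ)) + n)) ^ β)⁻¹ ≤ S)
    (a b : (Fin n → ℕ) → ℂ) (L : Fin n → ℕ) :
    ‖∑ L₁ ∈ Finset.Iic L, a L₁ * b (L - L₁)‖ ^ 2 * ((∑ i, (L i : ℝ)) + n) ^ β ≤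
      (2 ^ (β + 1) * S) *
        ∑ L₁ ∈ Finset.Iic L,
          (‖a L₁‖ ^ 2 * ((∑ i, (L₁ i : ℝ)) + n) ^ β) *
          (‖b (L - L₁)‖ ^ 2 * ((∑ i, ((L - L₁) i : ℝ)) + n) ^ β) := by
  have hn0 : (1:ℝ) ≤ n := by exact_mod_cast hn
  have hβ0 : (0:ℝ) ≤ β := by linarith
  set w : (Fin n → ℕ) → ℝ := fun M => ((∑ i, (M i : ℝ)) + n) ^ β with hw
  have hwpos : ∀ M, 0 < w M := by
    intro M
    have : (0:ℝ) ≤ ∑ i, (M i : ℝ) := Finset.sum_nonneg fun i _ => by positivity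
    have hb : (0:ℝ) < (∑ i, (M i : ℝ)) + n := by linarith
    exact Real.rpow_pos_of_pos hb β
  set T : ℝ := ∑ L₁ ∈ Finset.Iic L,
      (‖a L₁‖ ^ 2 * w L₁) * (‖b (L - L₁)‖ ^ 2 * w (L - L₁)) with hT
  have hTnn : 0 ≤ T :=
    Finset.sum_nonneg fun L₁ _ => by positivity
  have h1 : ‖∑ L₁ ∈ Finset.Iic L, a L₁ * b (L - L₁)‖ ≤
      ∑ L₁ ∈ Finset.Iic L, ‖a L₁‖ * ‖b (L - L₁)‖ := by
    refine (norm_sum_le _ _).trans (le_of_eq ?_)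
    exact Finset.sum_congr rfl fun L₁ _ => norm_mul _ _
  have h1sq : ‖∑ L₁ ∈ Finset.Iic L, a L₁ * b (L - L₁)‖ ^ 2 ≤
      (∑ L₁ ∈ Finset.Iic L, ‖a L₁‖ * ‖b (L - L₁)‖) ^ 2 :=
    pow_le_pow_left₀ (norm_nonneg _) h1 2
  have hCS : (∑ L₁ ∈ Finset.Iic L, ‖a L₁‖ * ‖b (L - L₁)‖) ^ 2 ≤
      T * ∑ L₁ ∈ Finset.Iic L, (w L₁ * w (L - L₁))⁻¹ := by
    have hcs := Finset.sum_mul_sq_le_sq_mul_sq (Finset.Iic L)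
      (fun L₁ => ‖a L₁‖ * ‖b (L - L₁)‖ * Real.sqrt (w L₁ * w (L - L₁)))
      (fun L₁ => (Real.sqrt (w L₁ * w (L - L₁)))⁻¹)
    have e1 : ∀ L₁ ∈ Finset.Iic L,
        ‖a L₁‖ * ‖b (L - L₁)‖ * Real.sqrt (w L₁ * w (L - L₁)) *
          (Real.sqrt (w L₁ * w (L - L₁)))⁻¹ = ‖a L₁‖ * ‖b (L - L₁)‖ := by
      intro L₁ _
      have hssq : Real.sqrt (w L₁ * w (L - L₁)) ≠ 0 := by
        have := mul_pos (hwpos L₁) (hwpos (L - L₁))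
        positivity
      field_simp
    have e2 : ∀ L₁ ∈ Finset.Iic L,
        (‖a L₁‖ * ‖b (L - L₁)‖ * Real.sqrt (w L₁ * w (L - L₁))) ^ 2 =
          (‖a L₁‖ ^ 2 * w L₁) * (‖b (L - L₁)‖ ^ 2 * w (L - L₁)) := by
      intro L₁ _
      have hnn : (0:ℝ) ≤ w L₁ * w (L - L₁) :=
        (mul_pos (hwpos L₁) (hwpos (L - L₁))).le
      rw [mul_pow, mul_pow, Real.sq_sqrt hnn]
      ring
    have e3 : ∀ L₁ ∈ Finset.Iic L,
        ((Real.sqrt (w L₁ * w (L - L₁)))⁻¹) ^ 2 = (w L₁ * w (L - L₁))⁻¹ := by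
      intro L₁ _
      have hnn : (0:ℝ) ≤ w L₁ * w (L - L₁) :=
        (mul_pos (hwpos L₁) (hwpos (L - L₁))).le
      rw [inv_pow, Real.sq_sqrt hnn]
    rw [Finset.sum_congr rfl e1, Finset.sum_congr rfl e2, Finset.sum_congr rfl e3] at hcs
    exact hcs
  have hker : ∑ L₁ ∈ Finset.Iic L, (w L₁ * w (L - L₁))⁻¹ ≤
      2 ^ β * (w L)⁻¹ * (2 * S) := by
    have hSn : ∀ M : Fin n → ℕ, (0:ℝ) ≤ (w M)⁻¹ := fun M => (inv_pos.mpr (hwpos M)).le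
    have hstep : ∀ L₁ ∈ Finset.Iic L,
        (w L₁ * w (L - L₁))⁻¹ ≤ 2 ^ β * (w L)⁻¹ * ((w L₁)⁻¹ + (w (L - L₁))⁻¹) := by
      intro L₁ hL₁
      have hle : L₁ ≤ L := Finset.mem_Iic.mp hL₁
      have hz := stmt6_weight_le hn hβ0 hle
      set x := w L₁; set y := w (L - L₁); set z := w L
      have hx0 : 0 < x := hwpos L₁
      have hy0 : 0 < y := hwpos (L - L₁)
      have hz0 : 0 < z := hwpos L
      have h2β : (0:ℝ) < (2:ℝ) ^ β := Real.rpow_pos_of_pos (by norm_num) β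
      have key : z ≤ 2 ^ β * (x + y) := hz
      calc (x * y)⁻¹ = z⁻¹ * (z * (x⁻¹ * y⁻¹)) := by
            field_simp
        _ ≤ z⁻¹ * ((2 ^ β * (x + y)) * (x⁻¹ * y⁻¹)) :=
            mul_le_mul_of_nonneg_left
              (mul_le_mul_of_nonneg_right key (by positivity)) (by positivity)
        _ = 2 ^ β * z⁻¹ * (x⁻¹ + y⁻¹) := by
            field_simp
            ring_nf
    calc ∑ L₁ ∈ Finset.Iic L, (w L₁ * w (L - L₁))⁻¹
        ≤ ∑ L₁ ∈ Finset.Iic L, 2 ^ β * (w L)⁻¹ * ((w L₁)⁻¹ + (w (L - L₁))⁻¹) :=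
          Finset.sum_le_sum hstep
      _ = 2 ^ β * (w L)⁻¹ *
            ((∑ L₁ ∈ Finset.Iic L, (w L₁)⁻¹) + ∑ L₁ ∈ Finset.Iic L, (w (L - L₁))⁻¹) := by
          rw [← Finset.mul_sum, Finset.sum_add_distrib]
      _ ≤ 2 ^ β * (w L)⁻¹ * (2 * S) := by
          have hb1 : ∑ L₁ ∈ Finset.Iic L, (w L₁)⁻¹ ≤ S :=
            le_trans (Summable.sum_le_tsum (Finset.Iic L) (fun M _ => hSn M) hS) hStsum
          have hb2 : ∑ L₁ ∈ Finset.Iic L, (w (L - L₁))⁻¹ ≤ S := by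
            rw [stmt6_sum_Iic_sub L (fun M => (w M)⁻¹)]
            exact hb1
          have hpos : (0:ℝ) ≤ 2 ^ β * (w L)⁻¹ := by positivity
          nlinarith
  have hwL : 0 < w L := hwpos L
  calc ‖∑ L₁ ∈ Finset.Iic L, a L₁ * b (L - L₁)‖ ^ 2 * w L
      ≤ (∑ L₁ ∈ Finset.Iic L, ‖a L₁‖ * ‖b (L - L₁)‖) ^ 2 * w L :=
        mul_le_mul_of_nonneg_right h1sq hwL.le
    _ ≤ (T * ∑ L₁ ∈ Finset.Iic L, (w L₁ * w (L - L₁))⁻¹) * w L :=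
        mul_le_mul_of_nonneg_right hCS hwL.le
    _ ≤ (T * (2 ^ β * (w L)⁻¹ * (2 * S))) * w L := by
        refine mul_le_mul_of_nonneg_right ?_ hwL.le
        exact mul_le_mul_of_nonneg_left hker hTnn
    _ = (2 ^ (β + 1) * S) * T := by
        rw [Real.rpow_add_one (by norm_num : (2:ℝ) ≠ 0) β]
        field_simp

end Stmt6Aux

set_option maxHeartbeats 4000000 in
/-- For `n ≥ 1` and `β > n`, the space `D_β` of power series `Σ a_L z^L` with
`‖f‖² = Σ_L |a_L|² (|L|+n)^β < ∞` is closed under the Cauchy product, with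
`‖f·g‖ ≤ C ‖f‖ ‖g‖` for a constant `C = C(n,β) > 0`. -/
theorem stmt_6 (n : ℕ) (hn : 1 ≤ n) (β : ℝ) (hβ : (n : ℝ) < β) :
    ∃ C : ℝ, 0 < C ∧ ∀ a b : (Fin n → ℕ) → ℂ,
      Summable (fun L : Fin n → ℕ => ‖a L‖ ^ 2 * ((∑ i, (L i : ℝ)) + n) ^ β) →
      Summable (fun L : Fin n → ℕ => ‖b L‖ ^ 2 * ((∑ i, (L i : ℝ)) + n) ^ β) →
      Summable (fun L : Fin n → ℕ =>
          ‖∑ L₁ ∈ Finset.Iic L, a L₁ * b (L - L₁)‖ ^ 2 * ((∑ i, (L i : ℝ)) + n) ^ β) ∧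
        Real.sqrt (∑' L : Fin n → ℕ,
            ‖∑ L₁ ∈ Finset.Iic L, a L₁ * b (L - L₁)‖ ^ 2 * ((∑ i, (L i : ℝ)) + n) ^ β) ≤
          C * Real.sqrt (∑' L : Fin n → ℕ, ‖a L‖ ^ 2 * ((∑ i, (L i : ℝ)) + n) ^ β) *
            Real.sqrt (∑' L : Fin n → ℕ, ‖b L‖ ^ 2 * ((∑ i, (L i : ℝ)) + n) ^ β) := by
  have hn0 : (1:ℝ) ≤ n := by exact_mod_cast hn
  have hβpos : (0:ℝ) < β := by linarith
  -- summability of the weight reciprocals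
  have hfs : Summable (fun k : ℕ => ((k : ℝ) + 1) ^ (-(β / n))) := by
    have hnn : (0:ℝ) < n := by linarith
    have hlt : -(β / n) < -1 := by
      rw [neg_lt_neg_iff, lt_div_iff₀ hnn]
      linarith
    have h1 : Summable (fun k : ℕ => (k : ℝ) ^ (-(β / n))) := Real.summable_nat_rpow.2 hlt
    have h2 := (_root_.summable_nat_add_iff 1).2 h1
    refine h2.congr fun k => ?_
    norm_cast
  have hS : Summable (fun L : Fin n → ℕ => ((((∑ i, (L i : ℝ)) + n)) ^ β)⁻¹) :=
    stmt6_summable_inv_weight hn hβ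
      (stmt6_pi_prod_summable (fun k => ((k:ℝ) + 1) ^ (-(β / n)))
        (fun k => by positivity) hfs n)
  set S : ℝ := ∑' L : Fin n → ℕ, ((((∑ i, (L i : ℝ)) + n)) ^ β)⁻¹ with hSdef
  have hwpos : ∀ M : Fin n → ℕ, (0:ℝ) < ((∑ i, (M i : ℝ)) + n) ^ β := by
    intro M
    have : (0:ℝ) ≤ ∑ i, (M i : ℝ) := Finset.sum_nonneg fun i _ => by positivity
    have hb : (0:ℝ) < (∑ i, (M i : ℝ)) + n := by linarith
    exact Real.rpow_pos_of_pos hb β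
  have hSpos : 0 < S := by
    refine Summable.tsum_pos hS (fun L => (inv_pos.mpr (hwpos L)).le) 0 ?_
    exact inv_pos.mpr (hwpos 0)
  have hKpos : (0:ℝ) < 2 ^ (β + 1) * S :=
    mul_pos (Real.rpow_pos_of_pos (by norm_num) _) hSpos
  refine ⟨Real.sqrt (2 ^ (β + 1) * S), Real.sqrt_pos.mpr hKpos, ?_⟩
  intro a b ha hb
  set K : ℝ := 2 ^ (β + 1) * S with hKdef
  set Sa : ℝ := ∑' L : Fin n → ℕ, ‖a L‖ ^ 2 * ((∑ i, (L i : ℝ)) + n) ^ β with hSa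
  set Sb : ℝ := ∑' L : Fin n → ℕ, ‖b L‖ ^ 2 * ((∑ i, (L i : ℝ)) + n) ^ β with hSb
  have hSann : 0 ≤ Sa := tsum_nonneg fun L => by positivity
  have hSbnn : 0 ≤ Sb := tsum_nonneg fun L => by positivity
  have hcore := stmt6_core_step hn hβ hS le_rfl a b
  -- ENNReal bookkeeping
  set TA : ENNReal := ∑' L : Fin n → ℕ,
    ENNReal.ofReal (‖a L‖ ^ 2 * ((∑ i, (L i : ℝ)) + n) ^ β) with hTAdef
  set TB : ENNReal := ∑' L : Fin n → ℕ,
    ENNReal.ofReal (‖b L‖ ^ 2 * ((∑ i, (L i : ℝ)) + n) ^ β) with hTBdef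
  have hTA : TA = ENNReal.ofReal Sa :=
    (ENNReal.ofReal_tsum_of_nonneg (fun L => by positivity) ha).symm
  have hTB : TB = ENNReal.ofReal Sb :=
    (ENNReal.ofReal_tsum_of_nonneg (fun L => by positivity) hb).symm
  have htsumT : (∑' L : Fin n → ℕ, ENNReal.ofReal
      (∑ L₁ ∈ Finset.Iic L,
        (‖a L₁‖ ^ 2 * ((∑ i, (L₁ i : ℝ)) + n) ^ β) *
        (‖b (L - L₁)‖ ^ 2 * ((∑ i, ((L - L₁) i : ℝ)) + n) ^ β))) = TA * TB := by
    have h1 : ∀ L : Fin n → ℕ, ENNReal.ofReal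
        (∑ L₁ ∈ Finset.Iic L,
          (‖a L₁‖ ^ 2 * ((∑ i, (L₁ i : ℝ)) + n) ^ β) *
          (‖b (L - L₁)‖ ^ 2 * ((∑ i, ((L - L₁) i : ℝ)) + n) ^ β)) =
        ∑ L₁ ∈ Finset.Iic L,
          ENNReal.ofReal (‖a L₁‖ ^ 2 * ((∑ i, (L₁ i : ℝ)) + n) ^ β) *
          ENNReal.ofReal (‖b (L - L₁)‖ ^ 2 * ((∑ i, ((L - L₁) i : ℝ)) + n) ^ β) := by
      intro L
      rw [ENNReal.ofReal_sum_of_nonneg (fun L₁ _ => by positivity)]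
      exact Finset.sum_congr rfl fun L₁ _ => ENNReal.ofReal_mul (by positivity)
    calc (∑' L : Fin n → ℕ, ENNReal.ofReal
        (∑ L₁ ∈ Finset.Iic L,
          (‖a L₁‖ ^ 2 * ((∑ i, (L₁ i : ℝ)) + n) ^ β) *
          (‖b (L - L₁)‖ ^ 2 * ((∑ i, ((L - L₁) i : ℝ)) + n) ^ β)))
        = ∑' L : Fin n → ℕ, ∑ L₁ ∈ Finset.Iic L,
            ENNReal.ofReal (‖a L₁‖ ^ 2 * ((∑ i, (L₁ i : ℝ)) + n) ^ β) *
            ENNReal.ofReal (‖b (L - L₁)‖ ^ 2 * ((∑ i, ((L - L₁) i : ℝ)) + n) ^ β) :=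
          tsum_congr h1
      _ = ∑' L₁ : Fin n → ℕ, ∑' L₂ : Fin n → ℕ,
            ENNReal.ofReal (‖a L₁‖ ^ 2 * ((∑ i, (L₁ i : ℝ)) + n) ^ β) *
            ENNReal.ofReal (‖b L₂‖ ^ 2 * ((∑ i, (L₂ i : ℝ)) + n) ^ β) :=
          stmt6_fubini_iic (fun L₁ L₂ =>
            ENNReal.ofReal (‖a L₁‖ ^ 2 * ((∑ i, (L₁ i : ℝ)) + n) ^ β) *
            ENNReal.ofReal (‖b L₂‖ ^ 2 * ((∑ i, (L₂ i : ℝ)) + n) ^ β))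
      _ = TA * TB := by
          simp_rw [ENNReal.tsum_mul_left, ENNReal.tsum_mul_right]
          rfl
  have hmain : (∑' L : Fin n → ℕ, ENNReal.ofReal
      (‖∑ L₁ ∈ Finset.Iic L, a L₁ * b (L - L₁)‖ ^ 2 * ((∑ i, (L i : ℝ)) + n) ^ β)) ≤
      ENNReal.ofReal (K * (Sa * Sb)) := by
    calc (∑' L : Fin n → ℕ, ENNReal.ofReal
        (‖∑ L₁ ∈ Finset.Iic L, a L₁ * b (L - L₁)‖ ^ 2 * ((∑ i, (L i : ℝ)) + n) ^ β))
        ≤ ∑' L : Fin n → ℕ, ENNReal.ofReal (K *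
            ∑ L₁ ∈ Finset.Iic L,
              (‖a L₁‖ ^ 2 * ((∑ i, (L₁ i : ℝ)) + n) ^ β) *
              (‖b (L - L₁)‖ ^ 2 * ((∑ i, ((L - L₁) i : ℝ)) + n) ^ β)) :=
          ENNReal.tsum_le_tsum (fun L => ENNReal.ofReal_le_ofReal (hcore L))
      _ = ENNReal.ofReal K * ∑' L : Fin n → ℕ, ENNReal.ofReal
            (∑ L₁ ∈ Finset.Iic L,
              (‖a L₁‖ ^ 2 * ((∑ i, (L₁ i : ℝ)) + n) ^ β) *
              (‖b (L - L₁)‖ ^ 2 * ((∑ i, ((L - L₁) i : ℝ)) + n) ^ β)) := by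
          rw [← ENNReal.tsum_mul_left]
          exact tsum_congr fun L => ENNReal.ofReal_mul hKpos.le
      _ = ENNReal.ofReal K * (TA * TB) := by rw [htsumT]
      _ = ENNReal.ofReal (K * (Sa * Sb)) := by
          rw [hTA, hTB, ← ENNReal.ofReal_mul hSann, ← ENNReal.ofReal_mul hKpos.le]
  have hfin : (∑' L : Fin n → ℕ, ENNReal.ofReal
      (‖∑ L₁ ∈ Finset.Iic L, a L₁ * b (L - L₁)‖ ^ 2 * ((∑ i, (L i : ℝ)) + n) ^ β)) ≠ ⊤ :=
    ne_top_of_le_ne_top ENNReal.ofReal_ne_top hmain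
  have hsummable : Summable (fun L : Fin n → ℕ =>
      ‖∑ L₁ ∈ Finset.Iic L, a L₁ * b (L - L₁)‖ ^ 2 * ((∑ i, (L i : ℝ)) + n) ^ β) := by
    have h := ENNReal.summable_toReal hfin
    refine h.congr fun L => ?_
    exact ENNReal.toReal_ofReal (by positivity)
  refine ⟨hsummable, ?_⟩
  have htsum_eq : (∑' L : Fin n → ℕ,
      ‖∑ L₁ ∈ Finset.Iic L, a L₁ * b (L - L₁)‖ ^ 2 * ((∑ i, (L i : ℝ)) + n) ^ β) =
      (∑' L : Fin n → ℕ, ENNReal.ofReal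
        (‖∑ L₁ ∈ Finset.Iic L, a L₁ * b (L - L₁)‖ ^ 2 * ((∑ i, (L i : ℝ)) + n) ^ β)).toReal := by
    rw [ENNReal.tsum_toReal_eq (fun L => ENNReal.ofReal_ne_top)]
    exact tsum_congr fun L => (ENNReal.toReal_ofReal (by positivity)).symm
  have hle : (∑' L : Fin n → ℕ,
      ‖∑ L₁ ∈ Finset.Iic L, a L₁ * b (L - L₁)‖ ^ 2 * ((∑ i, (L i : ℝ)) + n) ^ β) ≤
      K * (Sa * Sb) := by
    rw [htsum_eq]
    exact ENNReal.toReal_le_of_le_ofReal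
      (mul_nonneg hKpos.le (mul_nonneg hSann hSbnn)) hmain
  calc Real.sqrt (∑' L : Fin n → ℕ,
        ‖∑ L₁ ∈ Finset.Iic L, a L₁ * b (L - L₁)‖ ^ 2 * ((∑ i, (L i : ℝ)) + n) ^ β)
      ≤ Real.sqrt (K * (Sa * Sb)) := Real.sqrt_le_sqrt hle
    _ = Real.sqrt K * (Real.sqrt Sa * Real.sqrt Sb) := by
        rw [Real.sqrt_mul hKpos.le, Real.sqrt_mul hSann]
    _ = Real.sqrt K * Real.sqrt Sa * Real.sqrt Sb := by ring
end

section
/- Let n ≥ 2, α > 0, and set ε = (n−1)α/n. Then the series Σ over multi-indices L ∈ ℕ^n of ∏_{i=1}^n (l_i+1)^{−(1+ε)} converges, while the series Σ over L ∈ ℕ^n of [∏_{i=1}^n (l_i+1)^{α−ε}] / (|L|+n)^{α+1} diverges. -/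
lemma summable_pi_prod {f : ℕ → ℝ} (hf0 : ∀ k, 0 ≤ f k) (hf : Summable f) :
    ∀ n : ℕ, Summable (fun L : Fin n → ℕ => ∏ i, f (L i)) := by
  intro n
  induction n with
  | zero => exact Summable.of_finite
  | succ m ih =>
    have h := hf.mul_of_nonneg ih hf0 (fun L => Finset.prod_nonneg fun i _ => hf0 _)
    apply ((Fin.consEquiv (fun _ : Fin (m + 1) => ℕ)).summable_iff).mp
    have he : ((fun L : Fin (m + 1) → ℕ => ∏ i, f (L i)) ∘ (Fin.consEquiv fun _ => ℕ))
        = fun p : ℕ × (Fin m → ℕ) => f p.1 * ∏ i, f (p.2 i) := by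
      funext p
      simp [Fin.prod_univ_succ]
    rw [he]
    exact h

/-- For `n ≥ 2`, `α > 0` and `ε = (n−1)α/n`, the series `Σ_L ∏ᵢ (lᵢ+1)^{−(1+ε)}` over
multi-indices `L ∈ ℕ^n` converges, while `Σ_L (∏ᵢ (lᵢ+1)^{α−ε}) / (|L|+n)^{α+1}` diverges. -/
theorem stmt_15 (n : ℕ) (hn : 2 ≤ n) (α : ℝ) (hα : 0 < α) (ε : ℝ)
    (hε : ε = (n - 1 : ℝ) * α / n) :
    Summable (fun L : Fin n → ℕ => ∏ i, ((L i : ℝ) + 1) ^ (-(1 + ε))) ∧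
      ¬ Summable (fun L : Fin n → ℕ =>
          (∏ i, ((L i : ℝ) + 1) ^ (α - ε)) / ((∑ i, (L i : ℝ)) + n) ^ (α + 1)) := by
  have hn0 : 0 < n := lt_of_lt_of_le two_pos hn
  have hnR : (0 : ℝ) < n := by exact_mod_cast hn0
  have hε0 : 0 < ε := by
    rw [hε]
    apply div_pos _ hnR
    apply mul_pos _ hα
    have : (2 : ℝ) ≤ n := by exact_mod_cast hn
    linarith
  constructor
  · -- convergence
    have h0 : ∀ k : ℕ, (0 : ℝ) ≤ ((k : ℝ) + 1) ^ (-(1 + ε)) := fun k =>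
      Real.rpow_nonneg (by positivity) _
    have hs : Summable (fun k : ℕ => (k : ℝ) ^ (-(1 + ε))) :=
      Real.summable_nat_rpow.mpr (by linarith)
    have hs1 := (summable_nat_add_iff 1).mpr hs
    have hs2 : Summable (fun k : ℕ => ((k : ℝ) + 1) ^ (-(1 + ε))) := by
      convert hs1 using 2 with k
      · rfl
      push_cast
      ring_nf
    exact summable_pi_prod (f := fun k : ℕ => ((k : ℝ) + 1) ^ (-(1 + ε))) h0 hs2 n
  · -- divergence
    intro hsum
    have hd : Function.Injective (fun l : ℕ => (fun _ : Fin n => l)) := by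
      intro a b hab
      exact congrFun hab ⟨0, hn0⟩
    have hcomp := hsum.comp_injective hd
    have hc : (0 : ℝ) < (n : ℝ) ^ (α + 1) := Real.rpow_pos_of_pos hnR _
    have hmul : Summable (fun l : ℕ => (n : ℝ) ^ (α + 1) *
        ((∏ _i : Fin n, ((l : ℝ) + 1) ^ (α - ε)) / ((∑ _i : Fin n, (l : ℝ)) + n) ^ (α + 1))) :=
      hcomp.mul_left _
    have hkey : ∀ l : ℕ, (n : ℝ) ^ (α + 1) *
        ((∏ _i : Fin n, ((l : ℝ) + 1) ^ (α - ε)) / ((∑ _i : Fin n, (l : ℝ)) + n) ^ (α + 1))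
        = ((l : ℝ) + 1)⁻¹ := by
      intro l
      have hl1 : (0 : ℝ) < (l : ℝ) + 1 := by positivity
      have h1 : (∏ _i : Fin n, ((l : ℝ) + 1) ^ (α - ε)) = ((l : ℝ) + 1) ^ α := by
        rw [Finset.prod_const, Finset.card_univ, Fintype.card_fin,
          ← Real.rpow_natCast (((l : ℝ) + 1) ^ (α - ε)) n, ← Real.rpow_mul hl1.le]
        congr 1
        rw [hε]
        field_simp
        ring
      have h2 : ((∑ _i : Fin n, (l : ℝ)) + n) = (n : ℝ) * ((l : ℝ) + 1) := by
        rw [Finset.sum_const, Finset.card_univ, Fintype.card_fin]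
        ring
      have hsplit : (n : ℝ) ^ (α + 1) *
          (((l : ℝ) + 1) ^ α / ((n : ℝ) ^ (α + 1) * ((l : ℝ) + 1) ^ (α + 1)))
          = ((n : ℝ) ^ (α + 1) / (n : ℝ) ^ (α + 1)) *
            (((l : ℝ) + 1) ^ α / ((l : ℝ) + 1) ^ (α + 1)) := by ring
      rw [h1, h2, Real.mul_rpow hnR.le hl1.le, hsplit, div_self (ne_of_gt hc), one_mul,
        ← Real.rpow_sub hl1, show α - (α + 1) = -1 by ring, Real.rpow_neg_one]
    rw [funext hkey] at hmul
    have h4 : Summable (fun l : ℕ => ((l : ℝ))⁻¹) := by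
      apply (summable_nat_add_iff (f := fun l : ℕ => ((l : ℝ))⁻¹) 1).mp
      convert hmul using 2 with l
      · rfl
      push_cast
      ring
    exact Real.not_summable_natCast_inv h4
end

section
/- Let H be a Hilbert space, g ∈ H, and let (v_k)_{k≥0} be an orthogonal family of nonzero vectors in H such that ⟨g, v_k⟩ = ⟨g, v_0⟩ for all k and ‖v_k‖² ≤ M·(k+1)^β for some M > 0 and β < 1. Then ⟨g, v_0⟩ = 0. -/
open scoped InnerProductSpace ComplexConjugate

/-- If `(v_k)` is an orthogonal family of nonzero vectors in a Hilbert space with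
`⟨g, v_k⟩ = ⟨g, v₀⟩` for all `k` and `‖v_k‖² ≤ M (k+1)^β` with `M > 0` and `β < 1`,
then `⟨g, v₀⟩ = 0`. -/
theorem stmt_19 {H : Type*} [NormedAddCommGroup H] [InnerProductSpace ℂ H] [CompleteSpace H]
    (g : H) (v : ℕ → H) (hne : ∀ k, v k ≠ 0)
    (horth : ∀ k l, k ≠ l → ⟪v k, v l⟫_ℂ = 0)
    (heq : ∀ k, ⟪g, v k⟫_ℂ = ⟪g, v 0⟫_ℂ)
    (M β : ℝ) (hM : 0 < M) (hβ : β < 1)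
    (hnorm : ∀ k : ℕ, ‖v k‖ ^ 2 ≤ M * ((k : ℝ) + 1) ^ β) :
    ⟪g, v 0⟫_ℂ = 0 := by
  by_contra hc
  set c : ℂ := ⟪g, v 0⟫_ℂ with hcdef
  have hcn : (0 : ℝ) < ‖c‖ := norm_pos_iff.mpr hc
  have hvpos : ∀ k, (0 : ℝ) < ‖v k‖ := fun k => norm_pos_iff.mpr (hne k)
  -- orthonormal family
  set e : ℕ → H := fun k => ((‖v k‖ : ℂ)⁻¹) • v k with he
  have honb : Orthonormal ℂ e := by
    rw [orthonormal_iff_ite]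
    intro i j
    simp only [he, inner_smul_left, inner_smul_right, map_inv₀, Complex.conj_ofReal]
    by_cases hij : i = j
    · subst hij
      rw [inner_self_eq_norm_sq_to_K]
      simp only [if_pos rfl]
      have : (‖v i‖ : ℂ) ≠ 0 := by exact_mod_cast (hvpos i).ne'
      field_simp
      simp
    · rw [horth i j hij, if_neg hij]; ring
  -- inner products with e
  have hinner : ∀ k, ‖⟪e k, g⟫_ℂ‖ ^ 2 = ‖c‖ ^ 2 / ‖v k‖ ^ 2 := by
    intro k
    have h1 : ⟪g, e k⟫_ℂ = ((‖v k‖ : ℂ)⁻¹) * c := by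
      rw [he]; simp [inner_smul_right, heq k]
    have h2 : ‖⟪e k, g⟫_ℂ‖ = ‖⟪g, e k⟫_ℂ‖ := norm_inner_symm _ _
    rw [h2, h1, norm_mul, norm_inv, Complex.norm_real, Real.norm_eq_abs,
      abs_of_pos (hvpos k)]
    field_simp
  -- lower bound for each term
  have hterm : ∀ k : ℕ, ‖c‖ ^ 2 / M * (1 / ((k : ℝ) + 1)) ≤ ‖⟪e k, g⟫_ℂ‖ ^ 2 := by
    intro k
    rw [hinner k]
    have hk1 : (1 : ℝ) ≤ (k : ℝ) + 1 := by
      have := Nat.cast_nonneg (α := ℝ) k; linarith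
    have hrpow : ((k : ℝ) + 1) ^ β ≤ ((k : ℝ) + 1) := by
      calc ((k : ℝ) + 1) ^ β ≤ ((k : ℝ) + 1) ^ (1 : ℝ) :=
            Real.rpow_le_rpow_of_exponent_le hk1 hβ.le
        _ = (k : ℝ) + 1 := Real.rpow_one _
    have hle : ‖v k‖ ^ 2 ≤ M * ((k : ℝ) + 1) :=
      (hnorm k).trans (by nlinarith)
    have h0 : ‖c‖ ^ 2 / M * (1 / ((k : ℝ) + 1)) = ‖c‖ ^ 2 / (M * ((k : ℝ) + 1)) := by
      field_simp
    rw [h0]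
    gcongr
    exact pow_pos (hvpos k) 2
  -- harmonic divergence gives contradiction
  have hdiv := Real.tendsto_sum_range_one_div_nat_succ_atTop
  have hdiv2 : Filter.Tendsto
      (fun n => ‖c‖ ^ 2 / M * ∑ i ∈ Finset.range n, (1 / ((i : ℝ) + 1))) Filter.atTop
      Filter.atTop :=
    hdiv.const_mul_atTop (by positivity)
  obtain ⟨n, hn⟩ := (hdiv2.eventually_gt_atTop (‖g‖ ^ 2)).exists
  have hbessel := honb.sum_inner_products_le (s := Finset.range n) g
  have hsum : ‖c‖ ^ 2 / M * ∑ i ∈ Finset.range n, (1 / ((i : ℝ) + 1))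
      ≤ ∑ i ∈ Finset.range n, ‖⟪e i, g⟫_ℂ‖ ^ 2 := by
    rw [Finset.mul_sum]
    exact Finset.sum_le_sum fun i _ => hterm i
  linarith
end
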